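/- Let R be a commutative integral domain and let ⋆ be a semistar operation of finite type on R. Then the following are equivalent: (1) each quasi-⋆-prime ideal of R is the radical of a ⋆-finite ideal; (2) each radical quasi-⋆-ideal of R is the radical of a ⋆-finite ideal; (3) R satisfies the ascending chain condition on radical quasi-⋆-ideals. -/

import Mathlib

open Pointwise

/-- A semistar operation on an integral domain `R` with quotient field `K`:
a map `E ↦ E^⋆` on the nonzero `R`-submodules of `K` satisfying the usual axioms.
(The map is defined on all submodules, but the axioms are only required for the
nonzero ones.) -/
structure SemistarOperation (R K : Type*) [CommRing R] [IsDomain R] [Field K]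
    [Algebra R K] [IsFractionRing R K] where
  star : Submodule R K → Submodule R K
  smul_star : ∀ (x : K), x ≠ 0 → ∀ E : Submodule R K, E ≠ ⊥ → star (x • E) = x • star E
  mono : ∀ E F : Submodule R K, E ≠ ⊥ → E ≤ F → star E ≤ star F
  le_star : ∀ E : Submodule R K, E ≠ ⊥ → E ≤ star E
  star_star : ∀ E : Submodule R K, E ≠ ⊥ → star (star E) = star E

namespace SemistarOperation

variable {R K : Type*} [CommRing R] [IsDomain R] [Field K] [Algebra R K] [IsFractionRing R K]
variable (s : SemistarOperation R K)

/-- `⋆` is of finite type: for every nonzero submodule `E`, the module `E^⋆` is the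
union of the `F^⋆` over the nonzero finitely generated submodules `F ⊆ E`. -/
def FiniteType : Prop :=
  ∀ E : Submodule R K, E ≠ ⊥ → ∀ x : K,
    x ∈ s.star E ↔ ∃ F : Submodule R K, F.FG ∧ F ≠ ⊥ ∧ F ≤ E ∧ x ∈ s.star F

/-- `I^⋆`, for an ideal `I` of `R` (viewing `I` as a submodule of `K`). -/
def idealStar (I : Ideal R) : Submodule R K :=
  s.star (Submodule.map (Algebra.linearMap R K) I)

/-- `I^⋆ ∩ R`, as an ideal of `R`. -/
def contract (I : Ideal R) : Ideal R :=
  Submodule.comap (Algebra.linearMap R K) (s.idealStar I)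

/-- A (nonzero) ideal `I` of `R` is a quasi-`⋆`-ideal if `I^⋆ ∩ R = I`. -/
def IsQuasiStarIdeal (I : Ideal R) : Prop :=
  I ≠ ⊥ ∧ s.contract I = I

/-- A nonzero ideal `L` of `R` is `⋆`-finite if `L^⋆ = F^⋆` for some nonzero
finitely generated ideal `F` of `R`. -/
def IsStarFinite (L : Ideal R) : Prop :=
  L ≠ ⊥ ∧ ∃ F : Ideal R, F.FG ∧ F ≠ ⊥ ∧ s.idealStar F = s.idealStar L

/-- `⋆` is stable: it distributes over finite intersections (of nonzero submodules
with nonzero intersection). -/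
def Stable : Prop :=
  ∀ E F : Submodule R K, E ≠ ⊥ → F ≠ ⊥ → E ⊓ F ≠ ⊥ →
    s.star (E ⊓ F) = s.star E ⊓ s.star F

/-- `⋆-Min(I)`: the set of quasi-`⋆`-prime ideals of `R` minimal over `I`. -/
def starMin (I : Ideal R) : Set (Ideal R) :=
  {P | Minimal (fun Q : Ideal R => Q.IsPrime ∧ s.IsQuasiStarIdeal Q ∧ I ≤ Q) P}

/-- A nonzero ideal `I` of `R` is a `⋆`-SFT-ideal if there are a finitely generated
ideal `J ⊆ I` and a positive integer `k` with `a ^ k ∈ J^⋆` for every `a ∈ I^⋆`. -/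
def IsSFT (I : Ideal R) : Prop :=
  I ≠ ⊥ ∧ ∃ J : Ideal R, J.FG ∧ J ≤ I ∧ ∃ k : ℕ, 0 < k ∧
    ∀ a ∈ s.idealStar I, a ^ k ∈ s.idealStar J

/-- `R` is a `⋆`-SFT-ring if every nonzero ideal of `R` is a `⋆`-SFT-ideal. -/
def IsSFTRing : Prop := ∀ I : Ideal R, I ≠ ⊥ → s.IsSFT I

end SemistarOperation


set_option linter.unusedSectionVars false
set_option linter.unusedVariables false
set_option maxHeartbeats 1000000

namespace SemistarOperation

variable {R K : Type*} [CommRing R] [IsDomain R] [Field K] [Algebra R K] [IsFractionRing R K]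
variable (s : SemistarOperation R K)

-- ## auxiliary lemmas

theorem ne_bot_mono {α : Type*} [PartialOrder α] [OrderBot α] {A B : α}
    (hA : A ≠ ⊥) (h : A ≤ B) : B ≠ ⊥ := fun hb =>
  hA (le_bot_iff.mp (hb ▸ h))

theorem mapK_ne_bot {I : Ideal R} (hI : I ≠ ⊥) :
    Submodule.map (Algebra.linearMap R K) I ≠ ⊥ := by
  obtain ⟨x, hx, hx0⟩ := (Submodule.ne_bot_iff _).mp hI
  refine (Submodule.ne_bot_iff _).mpr ⟨algebraMap R K x, Submodule.mem_map_of_mem hx, ?_⟩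
  exact fun h => hx0 (IsFractionRing.injective R K (by simpa using h))

theorem mem_contract {I : Ideal R} {x : R} :
    x ∈ s.contract I ↔ algebraMap R K x ∈ s.idealStar I := Iff.rfl

theorem idealStar_mono {I J : Ideal R} (hI : I ≠ ⊥) (h : I ≤ J) :
    s.idealStar I ≤ s.idealStar J :=
  s.mono _ _ (mapK_ne_bot hI) (Submodule.map_mono h)

theorem le_contract {I : Ideal R} (hI : I ≠ ⊥) : I ≤ s.contract I := fun x hx =>
  s.le_star _ (mapK_ne_bot hI) (Submodule.mem_map_of_mem hx)

theorem contract_ne_bot {I : Ideal R} (hI : I ≠ ⊥) : s.contract I ≠ ⊥ := fun h =>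
  hI (le_bot_iff.mp (h ▸ s.le_contract hI))

theorem contract_mono {I J : Ideal R} (hI : I ≠ ⊥) (h : I ≤ J) :
    s.contract I ≤ s.contract J :=
  Submodule.comap_mono (s.idealStar_mono hI h)

theorem idealStar_contract {I : Ideal R} (hI : I ≠ ⊥) :
    s.idealStar (s.contract I) = s.idealStar I := by
  refine le_antisymm ?_ (s.idealStar_mono hI (s.le_contract hI))
  have h1 : Submodule.map (Algebra.linearMap R K) (s.contract I) ≤ s.idealStar I :=
    Submodule.map_le_iff_le_comap.mpr le_rfl
  calc s.idealStar (s.contract I)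
      ≤ s.star (s.idealStar I) := s.mono _ _ (mapK_ne_bot (s.contract_ne_bot hI)) h1
    _ = s.idealStar I := s.star_star _ (mapK_ne_bot hI)

theorem contract_contract {I : Ideal R} (hI : I ≠ ⊥) :
    s.contract (s.contract I) = s.contract I := by
  show Submodule.comap _ (s.idealStar _) = _
  rw [s.idealStar_contract hI]; rfl

theorem contract_quasi {I : Ideal R} (hI : I ≠ ⊥) : s.IsQuasiStarIdeal (s.contract I) :=
  ⟨s.contract_ne_bot hI, s.contract_contract hI⟩

theorem starFinite_contract {J : Ideal R} (hfg : J.FG) (hJ : J ≠ ⊥) :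
    s.IsStarFinite (s.contract J) :=
  ⟨s.contract_ne_bot hJ, J, hfg, hJ, (s.idealStar_contract hJ).symm⟩

-- nonbottom facts in K
theorem smulK_ne_bot {x : K} (hx : x ≠ 0) {E : Submodule R K} (hE : E ≠ ⊥) : x • E ≠ ⊥ := by
  obtain ⟨e, he, he0⟩ := (Submodule.ne_bot_iff _).mp hE
  exact (Submodule.ne_bot_iff _).mpr ⟨x • e, Submodule.smul_mem_pointwise_smul _ _ _ he,
    by simpa [smul_eq_mul] using mul_ne_zero hx he0⟩

theorem mulK_ne_bot {E F : Submodule R K} (hE : E ≠ ⊥) (hF : F ≠ ⊥) : E * F ≠ ⊥ := by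
  obtain ⟨e, he, he0⟩ := (Submodule.ne_bot_iff _).mp hE
  obtain ⟨f, hf, hf0⟩ := (Submodule.ne_bot_iff _).mp hF
  exact (Submodule.ne_bot_iff _).mpr ⟨e * f, Submodule.mul_mem_mul he hf, mul_ne_zero he0 hf0⟩

theorem powK_ne_bot {E : Submodule R K} (hE : E ≠ ⊥) (n : ℕ) : E ^ n ≠ ⊥ := by
  induction n with
  | zero =>
    rw [pow_zero]
    exact (Submodule.ne_bot_iff _).mpr ⟨1, Submodule.one_le.mp le_rfl, one_ne_zero⟩
  | succ n ih => rw [pow_succ]; exact mulK_ne_bot ih hE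

theorem star_ne_bot {E : Submodule R K} (hE : E ≠ ⊥) : s.star E ≠ ⊥ := fun h =>
  hE (le_bot_iff.mp (h ▸ s.le_star E hE))

theorem mul_star_le {E F : Submodule R K} (hE : E ≠ ⊥) (hF : F ≠ ⊥) :
    E * s.star F ≤ s.star (E * F) := by
  refine Submodule.mul_le.mpr fun a ha b hb => ?_
  rcases eq_or_ne a 0 with rfl | ha0
  · rw [zero_mul]; exact zero_mem _
  · have h1 : a * b ∈ a • s.star F := by
      simpa [smul_eq_mul] using Submodule.smul_mem_pointwise_smul b a (s.star F) hb
    rw [← s.smul_star a ha0 F hF] at h1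
    have h2 : a • F ≤ E * F := by
      rw [← Submodule.span_singleton_mul]
      exact mul_le_mul_left (Submodule.span_le.mpr (Set.singleton_subset_iff.mpr ha)) _
    exact s.mono _ _ (smulK_ne_bot ha0 hF) h2 h1

theorem star_mul_star_le {E F : Submodule R K} (hE : E ≠ ⊥) (hF : F ≠ ⊥) :
    s.star E * s.star F ≤ s.star (E * F) := by
  have h1 : s.star F * s.star E ≤ s.star (s.star F * E) :=
    s.mul_star_le (s.star_ne_bot hF) hE
  have h2 : s.star F * E ≤ s.star (E * F) := by
    rw [mul_comm]; exact s.mul_star_le hE hF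
  have hne : s.star F * E ≠ ⊥ :=
    ne_bot_mono (mulK_ne_bot (s.star_ne_bot hF) hE) le_rfl
  calc s.star E * s.star F = s.star F * s.star E := mul_comm _ _
    _ ≤ s.star (s.star F * E) := h1
    _ ≤ s.star (s.star (E * F)) := s.mono _ _ hne h2
    _ = s.star (E * F) := s.star_star _ (mulK_ne_bot hE hF)

theorem star_pow_le {E : Submodule R K} (hE : E ≠ ⊥) {n : ℕ} (hn : 1 ≤ n) :
    (s.star E) ^ n ≤ s.star (E ^ n) := by
  induction n with
  | zero => omega
  | succ n ih =>
    rcases Nat.eq_or_lt_of_le hn with h | h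
    · rw [← h, pow_one, pow_one]
    · have hn' : 1 ≤ n := by omega
      calc (s.star E) ^ (n + 1) = (s.star E) ^ n * s.star E := pow_succ _ _
        _ ≤ s.star (E ^ n) * s.star E := mul_le_mul_left (ih hn') _
        _ ≤ s.star (E ^ n * E) := s.star_mul_star_le (powK_ne_bot hE n) hE
        _ = s.star (E ^ (n + 1)) := by rw [← pow_succ]

theorem mapK_pow (I : Ideal R) (n : ℕ) :
    Submodule.map (Algebra.linearMap R K) (I ^ n)
      = (Submodule.map (Algebra.linearMap R K) I) ^ n := by
  have h : Algebra.linearMap R K = (Algebra.ofId R K).toLinearMap := LinearMap.ext fun _ => rfl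
  rw [h]
  exact Submodule.map_pow (M := I) (Algebra.ofId R K) n

theorem mapK_mul (I J : Ideal R) :
    Submodule.map (Algebra.linearMap R K) (I * J)
      = Submodule.map (Algebra.linearMap R K) I * Submodule.map (Algebra.linearMap R K) J := by
  have h : Algebra.linearMap R K = (Algebra.ofId R K).toLinearMap := LinearMap.ext fun _ => rfl
  rw [h]
  exact Submodule.map_mul (M := I) (N := J) (Algebra.ofId R K)

theorem ideal_pow_ne_bot {J : Ideal R} (hJ : J ≠ ⊥) (n : ℕ) : J ^ n ≠ ⊥ := by
  obtain ⟨x, hx, hx0⟩ := (Submodule.ne_bot_iff _).mp hJ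
  exact (Submodule.ne_bot_iff _).mpr ⟨x ^ n, Ideal.pow_mem_pow hx n, pow_ne_zero n hx0⟩

theorem pow_mem_contract {J : Ideal R} (hJ : J ≠ ⊥) {x : R} (hx : x ∈ s.contract J)
    {n : ℕ} (hn : 1 ≤ n) : x ^ n ∈ s.contract (J ^ n) := by
  have h1 : (algebraMap R K x) ^ n ∈ (s.idealStar J) ^ n := Submodule.pow_mem_pow (M := s.idealStar J) (s.mem_contract.mp hx) n
  rw [mem_contract, map_pow]
  show (algebraMap R K x) ^ n ∈ s.star (Submodule.map (Algebra.linearMap R K) (J ^ n))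
  rw [mapK_pow]
  exact s.star_pow_le (mapK_ne_bot hJ) hn h1

theorem exists_fg_of_mem_idealStar (hs : s.FiniteType) {I : Ideal R} (hI : I ≠ ⊥) {x : K}
    (hx : x ∈ s.idealStar I) :
    ∃ J : Ideal R, J.FG ∧ J ≠ ⊥ ∧ J ≤ I ∧ x ∈ s.idealStar J := by
  obtain ⟨F, hFG, hF0, hFle, hxF⟩ := (hs _ (mapK_ne_bot hI) x).mp hx
  obtain ⟨S, hSfin, hspan⟩ := Submodule.fg_def.mp hFG
  have hT : ∀ t ∈ S, ∃ y ∈ I, Algebra.linearMap R K y = t := fun t ht =>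
    Submodule.mem_map.mp (hFle (hspan ▸ Submodule.subset_span ht))
  choose! g hg1 hg2 using hT
  have key : F ≤ Submodule.map (Algebra.linearMap R K) (Ideal.span (g '' S)) := by
    rw [← hspan]
    refine Submodule.span_le.mpr fun t ht => Submodule.mem_map.mpr
      ⟨g t, Ideal.subset_span ⟨t, ht, rfl⟩, hg2 t ht⟩
  refine ⟨Ideal.span (g '' S), Submodule.fg_span (hSfin.image g), ?_, ?_, ?_⟩
  · intro h
    rw [h] at key
    simp only [Submodule.map_bot, le_bot_iff] at key
    exact hF0 key
  · exact Ideal.span_le.mpr (by rintro _ ⟨t, ht, rfl⟩; exact hg1 t ht)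
  · exact s.mono _ _ hF0 key hxF

theorem radical_quasi (hs : s.FiniteType) {I : Ideal R} (hI : I ≠ ⊥) (hq : s.contract I = I) :
    s.contract I.radical = I.radical := by
  have hrad0 : I.radical ≠ ⊥ := ne_bot_mono hI Ideal.le_radical
  refine le_antisymm ?_ (s.le_contract hrad0)
  intro x hx
  obtain ⟨J, hJfg, hJ0, hJle, hxJ⟩ := s.exists_fg_of_mem_idealStar hs hrad0 hx
  obtain ⟨n, hn⟩ := Ideal.exists_pow_le_of_le_radical_of_fg hJle hJfg
  set N := max n 1 with hN
  have hJN : J ^ N ≤ I := le_trans (Ideal.pow_le_pow_right (le_max_left n 1)) hn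
  have hxN : x ^ N ∈ s.contract (J ^ N) := s.pow_mem_contract hJ0 hxJ (le_max_right n 1)
  have hmem : x ^ N ∈ s.contract I := s.contract_mono (ideal_pow_ne_bot hJ0 N) hJN hxN
  rw [hq] at hmem
  exact ⟨N, hmem⟩

theorem fg_le_of_le_sSup {c : Set (Ideal R)} (hne : c.Nonempty) (hdir : DirectedOn (· ≤ ·) c)
    {J : Ideal R} (hfg : J.FG) (hle : J ≤ sSup c) : ∃ P ∈ c, J ≤ P := by
  classical
  obtain ⟨T, hT⟩ := hfg
  have main : ∀ T : Finset R, (↑T : Set R) ⊆ ↑(sSup c) → ∃ P ∈ c, (↑T : Set R) ⊆ ↑P := by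
    intro T
    induction T using Finset.induction_on with
    | empty => exact fun _ => ⟨hne.choose, hne.choose_spec, by simp⟩
    | @insert a T ha ih =>
      intro hsub
      rw [Finset.coe_insert, Set.insert_subset_iff] at hsub
      obtain ⟨P1, hP1, hTP⟩ := ih hsub.2
      obtain ⟨Q, hQ, haQ⟩ := (Submodule.mem_sSup_of_directed hne hdir).mp hsub.1
      obtain ⟨W, hW, hPW, hQW⟩ := hdir P1 hP1 Q hQ
      exact ⟨W, hW, by
        rw [Finset.coe_insert]
        exact Set.insert_subset_iff.mpr ⟨hQW haQ, fun y hy => hPW (hTP hy)⟩⟩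
  obtain ⟨P, hP, hTP⟩ := main T (fun x hx => hle (hT ▸ Submodule.subset_span hx))
  exact ⟨P, hP, hT ▸ Submodule.span_le.mpr hTP⟩

theorem sSup_props (hs : s.FiniteType) {c : Set (Ideal R)} (hne : c.Nonempty)
    (hdir : DirectedOn (· ≤ ·) c)
    (hall : ∀ J ∈ c, s.IsQuasiStarIdeal J ∧ J.radical = J) :
    s.IsQuasiStarIdeal (sSup c) ∧ (sSup c).radical = sSup c ∧
      ∀ L : Ideal R, s.IsStarFinite L → sSup c = L.radical → ∃ J ∈ c, sSup c = J := by
  obtain ⟨J0, hJ0⟩ := id hne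
  have hU0 : sSup c ≠ ⊥ := ne_bot_mono (hall J0 hJ0).1.1 (le_sSup hJ0)
  have hquasi : s.contract (sSup c) = sSup c := by
    refine le_antisymm ?_ (s.le_contract hU0)
    intro x hx
    obtain ⟨J, hJfg, hJb, hJle, hxJ⟩ := s.exists_fg_of_mem_idealStar hs hU0 hx
    obtain ⟨P, hP, hJP⟩ := fg_le_of_le_sSup hne hdir hJfg hJle
    have hxP : x ∈ s.contract P := s.mem_contract.mpr (s.idealStar_mono hJb hJP hxJ)
    rw [(hall P hP).1.2] at hxP
    exact le_sSup hP hxP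
  have hrad : (sSup c).radical = sSup c := by
    refine le_antisymm ?_ Ideal.le_radical
    intro x hx
    obtain ⟨n, hn⟩ := hx
    obtain ⟨P, hP, hxP⟩ := (Submodule.mem_sSup_of_directed hne hdir).mp hn
    have hxr : x ∈ Ideal.radical P := ⟨n, hxP⟩
    rw [(hall P hP).2] at hxr
    exact le_sSup hP hxr
  refine ⟨⟨hU0, hquasi⟩, hrad, ?_⟩
  rintro L ⟨hL0, F, hFfg, hF0, hFL⟩ hrL
  have hcFL : s.contract F = s.contract L := by
    show Submodule.comap _ (s.idealStar F) = Submodule.comap _ (s.idealStar L)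
    rw [hFL]
  have hLle : L ≤ sSup c := hrL ▸ Ideal.le_radical
  have hFle : F ≤ sSup c := by
    calc F ≤ s.contract F := s.le_contract hF0
    _ = s.contract L := hcFL
    _ ≤ s.contract (sSup c) := s.contract_mono hL0 hLle
    _ = sSup c := hquasi
  obtain ⟨P, hP, hFP⟩ := fg_le_of_le_sSup hne hdir hFfg hFle
  refine ⟨P, hP, le_antisymm ?_ (le_sSup hP)⟩
  intro x hx
  rw [hrL] at hx
  obtain ⟨n, hn⟩ := hx
  have h1 : x ^ n ∈ s.contract L := s.le_contract hL0 hn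
  rw [← hcFL] at h1
  have h2 : x ^ n ∈ s.contract P := s.contract_mono hF0 hFP h1
  rw [(hall P hP).1.2] at h2
  have h3 : x ∈ P.radical := ⟨n, h2⟩
  rw [(hall P hP).2] at h3
  exact h3

theorem exists_maximal_of_acc
    (hacc : ∀ f : ℕ →o Ideal R, (∀ n, s.IsQuasiStarIdeal (f n) ∧ (f n).radical = f n) →
      ∃ n, ∀ m, n ≤ m → f m = f n)
    (S : Set (Ideal R)) (hall : ∀ J ∈ S, s.IsQuasiStarIdeal J ∧ J.radical = J)
    (hne : S.Nonempty) : ∃ M, Maximal (· ∈ S) M := by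
  by_contra h
  push_neg at h
  have step : ∀ x : S, ∃ y : S, (x : Ideal R) < y := by
    rintro ⟨J, hJ⟩
    by_contra hc
    push_neg at hc
    refine h J ⟨hJ, fun b hb hle => ?_⟩
    by_contra hble
    exact absurd (lt_of_le_not_ge hle hble) (by simpa using hc ⟨b, hb⟩)
  choose g hg using step
  obtain ⟨J0, hJ0⟩ := hne
  let F : ℕ → S := fun n => g^[n] ⟨J0, hJ0⟩
  have hlt : ∀ n, (F n : Ideal R) < F (n + 1) := by
    intro n
    have hit : F (n + 1) = g (F n) := Function.iterate_succ_apply' g n _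
    rw [hit]
    exact hg (F n)
  have hmono : StrictMono fun n => (F n : Ideal R) := strictMono_nat_of_lt_succ hlt
  obtain ⟨n, hn⟩ := hacc ⟨fun n => (F n : Ideal R), hmono.monotone⟩ (fun n => hall _ (F n).2)
  exact absurd (hn (n + 1) (Nat.le_succ n)) (ne_of_gt (hlt n))

theorem main_step (hs : s.FiniteType) {M : Ideal R} (hM0 : M ≠ ⊥) (hMq : s.contract M = M)
    {a : R} (ha : a ∉ M)
    (hmax : ∃ L, s.IsStarFinite L ∧ (s.contract (M ⊔ Ideal.span {a})).radical = L.radical) :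
    ∃ C : Ideal R, C.FG ∧ C ≤ M ∧ M ≤ (s.contract (C ⊔ Ideal.span {a})).radical := by
  have ha0 : a ≠ 0 := fun h => ha (h ▸ M.zero_mem)
  set A := M ⊔ Ideal.span {a} with hA
  have hA0 : A ≠ ⊥ := ne_bot_mono hM0 le_sup_left
  set Ma := (s.contract A).radical with hMa
  have hMaq : s.contract Ma = Ma :=
    s.radical_quasi hs (s.contract_ne_bot hA0) (s.contract_contract hA0)
  obtain ⟨L, ⟨hL0, F, hFfg, hF0, hFL⟩, hMaL⟩ := hmax
  have hcFL : s.contract F = s.contract L := by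
    show Submodule.comap _ (s.idealStar F) = Submodule.comap _ (s.idealStar L)
    rw [hFL]
  have hMarad : Ma.radical = Ma := by rw [hMa, Ideal.radical_idem]
  have hMaF : Ma = (s.contract F).radical := by
    refine le_antisymm ?_ ?_
    · rw [hMaL]
      exact Ideal.radical_mono (le_trans (s.le_contract hL0) (le_of_eq hcFL.symm))
    · have h1 : s.contract L ≤ Ma := by
        have hLMa : L ≤ Ma := hMaL ▸ Ideal.le_radical
        calc s.contract L ≤ s.contract Ma := s.contract_mono hL0 hLMa
          _ = Ma := hMaq
      rw [hcFL]
      calc (s.contract L).radical ≤ Ma.radical := Ideal.radical_mono h1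
        _ = Ma := hMarad
  have hFMa : F ≤ (s.contract A).radical := by
    have h2 : F ≤ (s.contract F).radical := le_trans (s.le_contract hF0) Ideal.le_radical
    rw [← hMaF] at h2
    exact hMa ▸ h2
  obtain ⟨n, hn⟩ := Ideal.exists_pow_le_of_le_radical_of_fg hFMa hFfg
  set N := max n 1 with hN
  have hFN : F ^ N ≤ s.contract A := le_trans (Ideal.pow_le_pow_right (le_max_left n 1)) hn
  have hFNfg : (F ^ N).FG := Submodule.FG.pow hFfg N
  have hFN0 : F ^ N ≠ ⊥ := ideal_pow_ne_bot hF0 N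
  have hMaFN : Ma ≤ (s.contract (F ^ N)).radical := by
    intro x hx
    rw [hMaF] at hx
    obtain ⟨k, hk⟩ := hx
    have h1 : (x ^ k) ^ N ∈ s.contract (F ^ N) := s.pow_mem_contract hF0 hk (le_max_right n 1)
    exact ⟨k * N, by rw [pow_mul]; exact h1⟩
  obtain ⟨T, hT⟩ := hFNfg
  have hTmem : ∀ t : T, algebraMap R K (t : R) ∈ s.idealStar A := fun t =>
    s.mem_contract.mp (hFN (hT ▸ Submodule.subset_span t.2))
  have hchoice := fun t : T => s.exists_fg_of_mem_idealStar hs hA0 (hTmem t)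
  choose Hf hHfg hH0 hHle hHmem using hchoice
  set H : Ideal R := T.attach.sup Hf with hH
  have hHA : H ≤ A := Finset.sup_le fun t _ => hHle t
  have hHfg' : H.FG := Submodule.fg_finset_sup _ _ fun t _ => hHfg t
  have hFNH : F ^ N ≤ s.contract H := by
    rw [← hT]
    refine Ideal.span_le.mpr fun t ht => s.mem_contract.mpr
      (s.idealStar_mono (hH0 ⟨t, ht⟩) (Finset.le_sup (Finset.mem_attach _ _)) (hHmem ⟨t, ht⟩))
  have hH0' : H ≠ ⊥ := by
    rcases T.eq_empty_or_nonempty with hemp | ⟨t, ht⟩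
    · exfalso
      apply hFN0
      rw [← hT, hemp]
      simp
    · exact ne_bot_mono (hH0 ⟨t, ht⟩) (Finset.le_sup (Finset.mem_attach _ _))
  have hMaH : Ma ≤ (s.contract H).radical := by
    refine le_trans hMaFN (Ideal.radical_mono ?_)
    calc s.contract (F ^ N) ≤ s.contract (s.contract H) := s.contract_mono hFN0 hFNH
      _ = s.contract H := s.contract_contract hH0'
  obtain ⟨S, hS⟩ := hHfg'
  have hSdec : ∀ t : S, ∃ y ∈ M, ∃ z ∈ Ideal.span {a}, y + z = (t : R) := fun t =>
    Submodule.mem_sup.mp (hHA (hS ▸ Submodule.subset_span t.2))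
  choose m hm z hz hmz using hSdec
  set C : Ideal R := Ideal.span (Set.range m) with hC
  have hCfg : C.FG := Submodule.fg_span (Set.finite_range m)
  have hCM : C ≤ M := Ideal.span_le.mpr (by rintro _ ⟨t, rfl⟩; exact hm t)
  have hHC : H ≤ C ⊔ Ideal.span {a} := by
    rw [← hS]
    refine Ideal.span_le.mpr fun t ht => ?_
    have h1 : m ⟨t, ht⟩ ∈ C := Ideal.subset_span ⟨⟨t, ht⟩, rfl⟩
    have heq := hmz ⟨t, ht⟩
    have hmem2 : m ⟨t, ht⟩ + z ⟨t, ht⟩ ∈ C ⊔ Ideal.span {a} :=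
      Submodule.add_mem_sup h1 (hz ⟨t, ht⟩)
    rwa [heq] at hmem2
  refine ⟨C, hCfg, hCM, ?_⟩
  have hMMa : M ≤ Ma := le_trans le_sup_left (le_trans (s.le_contract hA0) Ideal.le_radical)
  exact le_trans hMMa (le_trans hMaH (Ideal.radical_mono (s.contract_mono hH0' hHC)))

theorem two_of_three (hs : s.FiniteType)
    (hacc : ∀ f : ℕ →o Ideal R, (∀ n, s.IsQuasiStarIdeal (f n) ∧ (f n).radical = f n) →
      ∃ n, ∀ m, n ≤ m → f m = f n) :
    ∀ I : Ideal R, s.IsQuasiStarIdeal I → I.radical = I →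
      ∃ L : Ideal R, s.IsStarFinite L ∧ I = L.radical := by
  intro I hIq hIr
  obtain ⟨hI0, hIc⟩ := hIq
  set S : Set (Ideal R) :=
    {T | ∃ J : Ideal R, J.FG ∧ J ≠ ⊥ ∧ J ≤ I ∧ T = (s.contract J).radical} with hSdef
  have hall : ∀ T ∈ S, s.IsQuasiStarIdeal T ∧ T.radical = T := by
    rintro T ⟨J, hJfg, hJ0, hJI, rfl⟩
    exact ⟨⟨ne_bot_mono (s.contract_ne_bot hJ0) Ideal.le_radical,
      s.radical_quasi hs (s.contract_ne_bot hJ0) (s.contract_contract hJ0)⟩,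
      Ideal.radical_idem _⟩
  have hTleI : ∀ T ∈ S, T ≤ I := by
    rintro T ⟨J, hJfg, hJ0, hJI, rfl⟩
    calc (s.contract J).radical
        ≤ (s.contract I).radical := Ideal.radical_mono (s.contract_mono hJ0 hJI)
      _ = I.radical := by rw [hIc]
      _ = I := hIr
  have hne : S.Nonempty := by
    obtain ⟨x, hx, hx0⟩ := (Submodule.ne_bot_iff _).mp hI0
    exact ⟨(s.contract (Ideal.span {x})).radical, Ideal.span {x}, ⟨{x}, by simp⟩,
      by simpa [Ideal.span_singleton_eq_bot] using hx0,
      Ideal.span_le.mpr (Set.singleton_subset_iff.mpr hx), rfl⟩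
  obtain ⟨T, hTm⟩ := s.exists_maximal_of_acc hacc S hall hne
  obtain ⟨J0, hJ0fg, hJ00, hJ0I, hTeq⟩ := hTm.1
  have hIT : I ≤ T := by
    by_contra hno
    obtain ⟨x, hxI, hxT⟩ := SetLike.not_le_iff_exists.mp hno
    set J' := J0 ⊔ Ideal.span {x} with hJ'
    have hJ'fg : J'.FG := Submodule.FG.sup hJ0fg ⟨{x}, by simp⟩
    have hJ'0 : J' ≠ ⊥ := ne_bot_mono hJ00 le_sup_left
    have hJ'I : J' ≤ I := sup_le hJ0I (Ideal.span_le.mpr (Set.singleton_subset_iff.mpr hxI))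
    have hT' : (s.contract J').radical ∈ S := ⟨J', hJ'fg, hJ'0, hJ'I, rfl⟩
    have hle : T ≤ (s.contract J').radical :=
      hTeq ▸ Ideal.radical_mono (s.contract_mono hJ00 le_sup_left)
    have hback := hTm.2 hT' hle
    have hxmem : x ∈ (s.contract J').radical :=
      Ideal.le_radical (s.le_contract hJ'0 (Submodule.mem_sup_right (Ideal.mem_span_singleton_self x)))
    exact hxT (hback hxmem)
  exact ⟨s.contract J0, s.starFinite_contract hJ0fg hJ00,
    le_antisymm (hTeq ▸ hIT) (hTeq ▸ hTleI T hTm.1)⟩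

theorem three_of_two (hs : s.FiniteType)
    (h2 : ∀ I : Ideal R, s.IsQuasiStarIdeal I → I.radical = I →
      ∃ L : Ideal R, s.IsStarFinite L ∧ I = L.radical) :
    ∀ f : ℕ →o Ideal R, (∀ n, s.IsQuasiStarIdeal (f n) ∧ (f n).radical = f n) →
      ∃ n, ∀ m, n ≤ m → f m = f n := by
  intro f hf
  have hdir : DirectedOn (· ≤ ·) (Set.range f) := directedOn_range.mpr f.monotone.directed_le
  have hne : (Set.range f).Nonempty := ⟨f 0, 0, rfl⟩
  have hall : ∀ J ∈ Set.range f, s.IsQuasiStarIdeal J ∧ J.radical = J := by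
    rintro J ⟨n, rfl⟩; exact hf n
  obtain ⟨hq, hr, hkey⟩ := s.sSup_props hs hne hdir hall
  obtain ⟨L, hL, hrL⟩ := h2 (sSup (Set.range f)) hq hr
  obtain ⟨J, ⟨n, rfl⟩, hUJ⟩ := hkey L hL hrL
  refine ⟨n, fun m hm => le_antisymm ?_ (f.monotone hm)⟩
  calc f m ≤ sSup (Set.range f) := le_sSup ⟨m, rfl⟩
    _ = f n := hUJ

theorem two_of_one (hs : s.FiniteType)
    (h1 : ∀ P : Ideal R, P.IsPrime → s.IsQuasiStarIdeal P →
      ∃ L : Ideal R, s.IsStarFinite L ∧ P = L.radical) :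
    ∀ I : Ideal R, s.IsQuasiStarIdeal I → I.radical = I →
      ∃ L : Ideal R, s.IsStarFinite L ∧ I = L.radical := by
  intro I hIq hIr
  by_contra hno
  set Sig : Set (Ideal R) :=
    {J | (s.IsQuasiStarIdeal J ∧ J.radical = J) ∧
      ¬∃ L : Ideal R, s.IsStarFinite L ∧ J = L.radical} with hSig
  have hISig : I ∈ Sig := ⟨⟨hIq, hIr⟩, hno⟩
  have hchain : ∀ c ⊆ Sig, IsChain (· ≤ ·) c → ∀ y ∈ c, ∃ ub ∈ Sig, ∀ z ∈ c, z ≤ ub := by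
    intro c hcS hc y hy
    have hne : c.Nonempty := ⟨y, hy⟩
    have hdir := hc.directedOn
    have hall : ∀ J ∈ c, s.IsQuasiStarIdeal J ∧ J.radical = J := fun J hJ => (hcS hJ).1
    obtain ⟨hq, hr, hkey⟩ := s.sSup_props hs hne hdir hall
    refine ⟨sSup c, ⟨⟨hq, hr⟩, ?_⟩, fun z hz => le_sSup hz⟩
    rintro ⟨L, hL, hrL⟩
    obtain ⟨J, hJc, hUJ⟩ := hkey L hL hrL
    exact (hcS hJc).2 ⟨L, hL, by rw [← hUJ, hrL]⟩
  obtain ⟨M, hIM, hMmax⟩ := zorn_le_nonempty₀ Sig hchain I hISig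
  obtain ⟨⟨⟨hM0, hMq⟩, hMr⟩, hMno⟩ := hMmax.1
  have hMtop : M ≠ ⊤ := by
    intro h
    refine hMno ⟨⊤, ⟨?_, ⊤, ⟨{1}, by simp⟩, ?_, rfl⟩, ?_⟩
    · intro hb
      have h1 : (1 : R) ∈ (⊥ : Ideal R) := hb ▸ Submodule.mem_top
      simpa using h1
    · intro hb
      have h1 : (1 : R) ∈ (⊥ : Ideal R) := hb ▸ Submodule.mem_top
      simpa using h1
    · rw [h]; exact (h ▸ hMr).symm
  have hMnp : ¬M.IsPrime := fun hp => hMno (h1 M hp ⟨hM0, hMq⟩)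
  rw [Ideal.not_isPrime_iff] at hMnp
  rcases hMnp with h | ⟨x, hx, y, hy, hxy⟩
  · exact hMtop h
  have key : ∀ t : R, t ∉ M →
      ∃ L, s.IsStarFinite L ∧ (s.contract (M ⊔ Ideal.span {t})).radical = L.radical := by
    intro t ht
    set A := M ⊔ Ideal.span {t} with hAdef
    have hA0 : A ≠ ⊥ := ne_bot_mono hM0 le_sup_left
    set Mt := (s.contract A).radical with hMtdef
    have hMtq : s.IsQuasiStarIdeal Mt :=
      ⟨ne_bot_mono (s.contract_ne_bot hA0) Ideal.le_radical,
       s.radical_quasi hs (s.contract_ne_bot hA0) (s.contract_contract hA0)⟩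
    have hMtr : Mt.radical = Mt := Ideal.radical_idem _
    by_contra hnoL
    have hMtS : Mt ∈ Sig := ⟨⟨hMtq, hMtr⟩, hnoL⟩
    have hMle : M ≤ Mt := le_trans le_sup_left (le_trans (s.le_contract hA0) Ideal.le_radical)
    have hback := hMmax.2 hMtS hMle
    have htMt : t ∈ Mt :=
      Ideal.le_radical (s.le_contract hA0 (Submodule.mem_sup_right (Ideal.mem_span_singleton_self t)))
    exact ht (hback htMt)
  obtain ⟨Ca, hCafg, hCaM, hMa⟩ := s.main_step hs hM0 hMq hx (key x hx)
  obtain ⟨Cb, hCbfg, hCbM, hMb⟩ := s.main_step hs hM0 hMq hy (key y hy)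
  have hx0 : x ≠ 0 := fun h => hx (h ▸ M.zero_mem)
  have hy0 : y ≠ 0 := fun h => hy (h ▸ M.zero_mem)
  have hxy0 : x * y ≠ 0 := mul_ne_zero hx0 hy0
  set D := Ca ⊔ Cb ⊔ Ideal.span {x * y} with hDdef
  have hDfg : D.FG := Submodule.FG.sup (Submodule.FG.sup hCafg hCbfg) ⟨{x * y}, by simp⟩
  have hD0 : D ≠ ⊥ :=
    ne_bot_mono (by simpa [Ideal.span_singleton_eq_bot] using hxy0 :
      Ideal.span {x * y} ≠ (⊥ : Ideal R)) le_sup_right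
  have hDM : D ≤ M := sup_le (sup_le hCaM hCbM)
    (Ideal.span_le.mpr (Set.singleton_subset_iff.mpr hxy))
  refine hMno ⟨s.contract D, s.starFinite_contract hDfg hD0, ?_⟩
  have hCaD : Ca ≤ D := le_trans le_sup_left le_sup_left
  have hCbD : Cb ≤ D := le_trans le_sup_right le_sup_left
  have hxyD : Ideal.span {x * y} ≤ D := le_sup_right
  set A' := Ca ⊔ Ideal.span {x} with hA'def
  set B' := Cb ⊔ Ideal.span {y} with hB'def
  have hA'0 : A' ≠ ⊥ :=
    ne_bot_mono (by simpa [Ideal.span_singleton_eq_bot] using hx0 :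
      Ideal.span {x} ≠ (⊥ : Ideal R)) le_sup_right
  have hB'0 : B' ≠ ⊥ :=
    ne_bot_mono (by simpa [Ideal.span_singleton_eq_bot] using hy0 :
      Ideal.span {y} ≠ (⊥ : Ideal R)) le_sup_right
  have hAB0 : A' * B' ≠ ⊥ := by
    refine (Submodule.ne_bot_iff _).mpr ⟨x * y, ?_, hxy0⟩
    exact Ideal.mul_mem_mul (Submodule.mem_sup_right (Ideal.mem_span_singleton_self x))
      (Submodule.mem_sup_right (Ideal.mem_span_singleton_self y))
  have hABD : A' * B' ≤ D := by
    refine Submodule.mul_le.mpr fun u hu v hv => ?_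
    obtain ⟨cu, hcu, zu, hzu, rfl⟩ := Submodule.mem_sup.mp hu
    obtain ⟨cv, hcv, zv, hzv, rfl⟩ := Submodule.mem_sup.mp hv
    obtain ⟨ru, rfl⟩ := Ideal.mem_span_singleton'.mp hzu
    obtain ⟨rv, rfl⟩ := Ideal.mem_span_singleton'.mp hzv
    have expand : (cu + ru * x) * (cv + rv * y)
        = cu * (cv + rv * y) + (ru * x) * cv + (ru * rv) * (x * y) := by ring
    rw [expand]
    refine Submodule.add_mem _ (Submodule.add_mem _ ?_ ?_) ?_
    · exact hCaD (Ideal.mul_mem_right _ _ hcu)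
    · exact hCbD (Ideal.mul_mem_left _ _ hcv)
    · exact hxyD (Ideal.mul_mem_left _ _ (Ideal.mem_span_singleton_self _))
  refine le_antisymm ?_ ?_
  · intro w hw
    obtain ⟨p, hp⟩ := hMa hw
    obtain ⟨q, hq⟩ := hMb hw
    refine ⟨p + q, ?_⟩
    have h3 : algebraMap R K (w ^ p) * algebraMap R K (w ^ q)
        ∈ s.idealStar A' * s.idealStar B' := Submodule.mul_mem_mul hp hq
    have h4 := s.star_mul_star_le (mapK_ne_bot hA'0) (mapK_ne_bot hB'0) h3
    rw [← mapK_mul] at h4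
    have h6 : algebraMap R K (w ^ p) * algebraMap R K (w ^ q) ∈ s.idealStar D :=
      s.idealStar_mono hAB0 hABD h4
    show algebraMap R K (w ^ (p + q)) ∈ s.idealStar D
    rw [pow_add, map_mul]
    exact h6
  · calc (s.contract D).radical
        ≤ (s.contract M).radical := Ideal.radical_mono (s.contract_mono hD0 hDM)
      _ = M.radical := by rw [hMq]
      _ = M := hMr

end SemistarOperation

/-- Let `⋆` be a semistar operation of finite type on the integral domain `R`.  The
following are equivalent: (1) each quasi-`⋆`-prime is the radical of a `⋆`-finite
ideal; (2) each radical quasi-`⋆`-ideal is the radical of a `⋆`-finite ideal;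
(3) `R` satisfies the a.c.c. on radical quasi-`⋆`-ideals. -/
theorem quasiStarPrime_radical_starFinite_tfae {R K : Type*} [CommRing R] [IsDomain R]
    [Field K] [Algebra R K] [IsFractionRing R K] (s : SemistarOperation R K)
    (hs : s.FiniteType) :
    ((∀ P : Ideal R, P.IsPrime → s.IsQuasiStarIdeal P →
        ∃ L : Ideal R, s.IsStarFinite L ∧ P = L.radical) ↔
      (∀ I : Ideal R, s.IsQuasiStarIdeal I → I.radical = I →
        ∃ L : Ideal R, s.IsStarFinite L ∧ I = L.radical)) ∧
    ((∀ I : Ideal R, s.IsQuasiStarIdeal I → I.radical = I →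
        ∃ L : Ideal R, s.IsStarFinite L ∧ I = L.radical) ↔
      (∀ f : ℕ →o Ideal R, (∀ n, s.IsQuasiStarIdeal (f n) ∧ (f n).radical = f n) →
        ∃ n, ∀ m, n ≤ m → f m = f n)) := by
  constructor
  · constructor
    · exact fun h1 => s.two_of_one hs h1
    · exact fun h2 P hP hPq => h2 P hPq hP.radical
  · constructor
    · exact fun h2 => s.three_of_two hs h2
    · exact fun h3 => s.two_of_three hs h3
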